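/- Suppose φ₀ : ℝ → ℝ is twice continuously differentiable, positive, square-integrable, and satisfies −φ₀'' + V·φ₀ = −μ₀²·φ₀ on ℝ, with 0.808 ≤ μ₀ ≤ 0.883. Then −μ₀² is the unique negative eigenvalue of L and it has multiplicity one: for every λ < 0 with λ ≠ −μ₀², there is no nonzero twice continuously differentiable ψ ∈ L²(ℝ) with −ψ'' + V·ψ = λ·ψ, and every twice continuously differentiable ψ ∈ L²(ℝ) with −ψ'' + V·ψ = −μ₀²·ψ is a real scalar multiple of φ₀. Moreover φ₀ is an even function and φ₀' is odd. -/

import Mathlib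

open Real MeasureTheory Filter

noncomputable def Qs (x : ℝ) : ℝ := (3/2) * (1 / Real.cosh (x/2))^2
noncomputable def Hs (x : ℝ) : ℝ := Real.tanh (x/2)
noncomputable def alphaFn (x : ℝ) : ℝ := (1/3) * (Real.sinh x + x)
noncomputable def alphaInv : ℝ → ℝ := Function.invFun alphaFn
noncomputable def Qt (x : ℝ) : ℝ := Qs (alphaInv x)
noncomputable def Ht (x : ℝ) : ℝ := Hs (alphaInv x)
noncomputable def Vpot (x : ℝ) : ℝ := 2 * (Qt x)^2 * (1 - Qt x)
lemma alpha_hasDeriv (x : ℝ) : HasDerivAt alphaFn ((1/3)*(Real.cosh x + 1)) x := by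
  have h := ((Real.hasDerivAt_sinh x).add (hasDerivAt_id x)).const_mul (1/3:ℝ)
  have : alphaFn = fun x => (1/3:ℝ) * (Real.sinh x + x) := rfl
  rw [this]
  simpa using h

lemma alpha_mono : StrictMono alphaFn := by
  apply strictMono_of_deriv_pos
  intro x
  rw [(alpha_hasDeriv x).deriv]
  have := Real.cosh_pos x
  linarith

lemma alpha_cont : Continuous alphaFn := by
  unfold alphaFn; fun_prop

lemma alpha_odd (x : ℝ) : alphaFn (-x) = -alphaFn x := by
  simp [alphaFn, Real.sinh_neg]; ring

lemma alpha_surj : Function.Surjective alphaFn := by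
  intro y
  have hc : (0:ℝ) ≤ 3 * |y| := by positivity
  have h1 : alphaFn (3 * |y|) = (1/3) * (Real.sinh (3*|y|) + 3*|y|) := rfl
  have hs : 0 ≤ Real.sinh (3*|y|) := Real.sinh_nonneg_iff.mpr hc
  have hub : y ≤ alphaFn (3*|y|) := by
    rw [h1]; have := abs_nonneg y; have := le_abs_self y; linarith
  have hlb : alphaFn (-(3*|y|)) ≤ y := by
    rw [alpha_odd, h1]; have := neg_abs_le y; linarith
  have := intermediate_value_Icc (by linarith : -(3*|y|) ≤ 3*|y|) alpha_cont.continuousOn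
  obtain ⟨x, _, hx⟩ := this ⟨hlb, hub⟩
  exact ⟨x, hx⟩

lemma ainv_right (x : ℝ) : alphaFn (alphaInv x) = x := Function.invFun_eq (alpha_surj x)

lemma ainv_left (x : ℝ) : alphaInv (alphaFn x) = x :=
  Function.leftInverse_invFun alpha_mono.injective x

lemma ainv_mono : StrictMono alphaInv := by
  intro x y hxy
  by_contra h
  push_neg at h
  have := alpha_mono.monotone h
  rw [ainv_right, ainv_right] at this
  linarith

lemma ainv_odd (x : ℝ) : alphaInv (-x) = -alphaInv x := by
  have : alphaFn (-(alphaInv x)) = -x := by rw [alpha_odd, ainv_right]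
  rw [← this, ainv_left]
-- numeric lemmas
lemma exp_y_lb : (1.93962:ℝ) ≤ Real.exp (53/80) := by
  have h : |Real.exp (53/80) - ∑ i ∈ Finset.range 10, ((53:ℝ)/80)^i / i.factorial|
      ≤ |(53:ℝ)/80|^10 * (Nat.succ 10 / (Nat.factorial 10 * 10)) := by
    apply Real.exp_bound (by rw [abs_of_nonneg] <;> norm_num) (by norm_num)
  rw [abs_le] at h
  have h2 := h.1
  rw [abs_of_nonneg (by norm_num)] at h2
  simp only [Finset.sum_range_succ] at h2
  norm_num [Nat.factorial] at h2 ⊢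
  linarith

lemma exp_y_ub : Real.exp (53/80) ≤ (1.93964:ℝ) := by
  have h : |Real.exp (53/80) - ∑ i ∈ Finset.range 10, ((53:ℝ)/80)^i / i.factorial|
      ≤ |(53:ℝ)/80|^10 * (Nat.succ 10 / (Nat.factorial 10 * 10)) := by
    apply Real.exp_bound (by rw [abs_of_nonneg] <;> norm_num) (by norm_num)
  rw [abs_le] at h
  have h2 := h.2
  rw [abs_of_nonneg (by norm_num)] at h2
  simp only [Finset.sum_range_succ] at h2
  norm_num [Nat.factorial] at h2 ⊢
  linarith

lemma sinh_s0_ub : Real.sinh (53/40) ≤ 1.76 := by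
  have he : Real.exp (53/40) = Real.exp (53/80) * Real.exp (53/80) := by
    rw [← Real.exp_add]; norm_num
  have hpos : (0:ℝ) < Real.exp (53/80) := Real.exp_pos _
  have h1 := exp_y_lb; have h2 := exp_y_ub
  rw [Real.sinh_eq, Real.exp_neg, he]
  rw [div_le_iff₀ (by norm_num : (0:ℝ) < 2)]
  have ht2 : Real.exp (53/80) * Real.exp (53/80) ≤ 3.762204 := by nlinarith
  have hpos2 : (0:ℝ) < Real.exp (53/80) * Real.exp (53/80) := by positivity
  have hinv : (3.762204:ℝ)⁻¹ ≤ (Real.exp (53/80) * Real.exp (53/80))⁻¹ :=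
    inv_anti₀ hpos2 ht2
  have : (0.2658:ℝ) ≤ (3.762204:ℝ)⁻¹ := by norm_num
  linarith

lemma cosh_y_sq_lb : (3/2:ℝ) ≤ (Real.cosh (53/80))^2 := by
  have hpos : (0:ℝ) < Real.exp (53/80) := Real.exp_pos _
  have h1 := exp_y_lb; have h2 := exp_y_ub
  rw [Real.cosh_eq, Real.exp_neg]
  have hinv : ((1.93964:ℝ))⁻¹ ≤ (Real.exp (53/80))⁻¹ := inv_anti₀ hpos h2
  have hinv2 : ((1.93964:ℝ))⁻¹ ≥ 0.515559 := by norm_num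
  nlinarith [hinv, hinv2]

lemma alpha_s0_le : alphaFn (53/40) ≤ 103/100 := by
  have := sinh_s0_ub
  show (1/3) * (Real.sinh (53/40) + 53/40) ≤ 103/100
  norm_num at this ⊢
  linarith

lemma ainv_ge (x : ℝ) (hx : 103/100 ≤ x) : (53/40:ℝ) ≤ alphaInv x := by
  have h1 : alphaFn (53/40) ≤ x := le_trans alpha_s0_le hx
  have := ainv_mono.monotone (le_trans alpha_s0_le hx)
  rwa [ainv_left] at this

-- Q and V lemmas
lemma Qs_pos (s : ℝ) : 0 < Qs s := by
  have := Real.cosh_pos (s/2); unfold Qs; positivity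

lemma Qs_le (s : ℝ) : Qs s ≤ 3/2 := by
  have h1 : (1:ℝ) ≤ Real.cosh (s/2) := Real.one_le_cosh _
  have h2 : (1:ℝ)/Real.cosh (s/2) ≤ 1 := by
    rw [div_le_one (by linarith)]; exact h1
  have h3 : (0:ℝ) < 1/Real.cosh (s/2) := by positivity
  unfold Qs; nlinarith

lemma Qs_even (s : ℝ) : Qs (-s) = Qs s := by
  unfold Qs; rw [show -s/2 = -(s/2) by ring, Real.cosh_neg]

lemma Qt_pos (x : ℝ) : 0 < Qt x := Qs_pos _
lemma Qt_le (x : ℝ) : Qt x ≤ 3/2 := Qs_le _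

lemma Vpot_even (x : ℝ) : Vpot (-x) = Vpot x := by
  unfold Vpot Qt
  rw [ainv_odd, Qs_even]

lemma Vpot_lb (x : ℝ) : -(9/4) ≤ Vpot x := by
  have h1 := Qt_pos x; have h2 := Qt_le x
  unfold Vpot; nlinarith [sq_nonneg (Qt x), sq_nonneg (Qt x - 3/2)]

lemma Vpot_ub (x : ℝ) : Vpot x ≤ 9/4 := by
  have h1 := Qt_pos x; have h2 := Qt_le x
  unfold Vpot; nlinarith [sq_nonneg (Qt x - 2/3), sq_nonneg (Qt x)]

lemma Vpot_abs (x : ℝ) : |Vpot x| ≤ 9/4 := by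
  rw [abs_le]; exact ⟨Vpot_lb x, Vpot_ub x⟩

lemma Qt_le_one (x : ℝ) (hx : 103/100 ≤ x) : Qt x ≤ 1 := by
  have hs : (53/40:ℝ) ≤ alphaInv x := ainv_ge x hx
  have hc : Real.cosh (53/80) ≤ Real.cosh (alphaInv x / 2) := by
    rw [Real.cosh_le_cosh]
    rw [abs_of_nonneg (by norm_num), abs_of_nonneg (by linarith)]
    linarith
  have hc2 : (3/2:ℝ) ≤ (Real.cosh (alphaInv x / 2))^2 := by
    have h0 : (0:ℝ) < Real.cosh (53/80) := Real.cosh_pos _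
    nlinarith [cosh_y_sq_lb]
  have hpos := Real.cosh_pos (alphaInv x / 2)
  show (3/2) * (1 / Real.cosh (alphaInv x / 2))^2 ≤ 1
  rw [div_pow, one_pow]
  rw [mul_comm, div_mul_eq_mul_div, div_le_one (by positivity)]
  linarith

lemma Vpot_tail (x : ℝ) (hx : 103/100 ≤ |x|) : 0 ≤ Vpot x := by
  have key : ∀ y : ℝ, 103/100 ≤ y → 0 ≤ Vpot y := by
    intro y hy
    have h1 := Qt_pos y
    have h2 := Qt_le_one y hy
    unfold Vpot; nlinarith
  rcases abs_cases x with ⟨h, _⟩ | ⟨h, _⟩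
  · exact key x (h ▸ hx)
  · rw [← Vpot_even]
    exact key (-x) (by rw [← h]; exact hx)
-- ### C² helpers
lemma cd1 {ψ : ℝ → ℝ} (h : ContDiff ℝ 2 ψ) : ContDiff ℝ 1 (deriv ψ) := by
  have h' : ContDiff ℝ (1+1) ψ := by norm_num; exact h
  exact (contDiff_succ_iff_deriv.mp h').2.2

lemma d1 {ψ : ℝ → ℝ} (h : ContDiff ℝ 2 ψ) (x : ℝ) : HasDerivAt ψ (deriv ψ x) x :=
  ((h.differentiable (by norm_num)) x).hasDerivAt

lemma d2 {ψ : ℝ → ℝ} (h : ContDiff ℝ 2 ψ) (x : ℝ) :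
    HasDerivAt (deriv ψ) (deriv (deriv ψ) x) x :=
  (((cd1 h).differentiable (by norm_num)) x).hasDerivAt

lemma c1 {ψ : ℝ → ℝ} (h : ContDiff ℝ 2 ψ) : Continuous (deriv ψ) := (cd1 h).continuous

lemma c2 {ψ : ℝ → ℝ} (h : ContDiff ℝ 2 ψ) : Continuous (deriv (deriv ψ)) :=
  (cd1 h).continuous_deriv (by norm_num)

-- ### eigenfunction data
structure Eig (lam : ℝ) (ψ : ℝ → ℝ) : Prop where
  smooth : ContDiff ℝ 2 ψ
  sq_int : MeasureTheory.Integrable (fun x => (ψ x)^2)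
  eq : ∀ x, deriv (deriv ψ) x = (Vpot x - lam) * ψ x

namespace Eig

variable {lam : ℝ} {ψ : ℝ → ℝ}

lemma neg (h : Eig lam ψ) : Eig lam (fun x => -ψ x) := by
  refine ⟨h.smooth.neg, by simpa using h.sq_int, ?_⟩
  intro x
  rw [deriv.fun_neg']
  have e2 : (deriv fun x => -deriv ψ x) = fun x => -(deriv (deriv ψ) x) := deriv.neg'
  rw [e2]
  show -(deriv (deriv ψ) x) = _
  rw [h.eq]
  ring

lemma refl (h : Eig lam ψ) : Eig lam (fun x => ψ (-x)) := by
  refine ⟨h.smooth.comp (contDiff_id.neg), ?_, ?_⟩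
  · have : (fun x => (ψ (-x))^2) = (fun x => (ψ x)^2) ∘ (fun x : ℝ => -x) := rfl
    rw [this]
    exact ((MeasureTheory.Measure.measurePreserving_neg _).integrable_comp
      h.sq_int.aestronglyMeasurable).mpr h.sq_int
  · intro x
    have e1 : (deriv fun x => ψ (-x)) = fun x => -(deriv ψ (-x)) :=
      funext fun y => deriv_comp_neg ψ y
    rw [e1]
    have e2 : (deriv fun x => -(deriv ψ (-x))) = fun x => -(deriv (fun y => deriv ψ (-y)) x) :=
      deriv.neg'
    rw [e2]
    show -(deriv (fun y => deriv ψ (-y)) x) = _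
    have e3 : deriv (fun y => deriv ψ (-y)) x = -(deriv (deriv ψ) (-x)) := deriv_comp_neg (deriv ψ) x
    rw [e3, h.eq, ← Vpot_even]
    ring

-- small values at infinity
lemma small (h : Eig lam ψ) (a : ℝ) {ε : ℝ} (hε : 0 < ε) :
    ∃ x, a ≤ x ∧ |ψ x| < ε := by
  by_contra hcon
  push_neg at hcon
  have hint : MeasureTheory.IntegrableOn (fun x => (ψ x)^2) (Set.Ici a) := h.sq_int.integrableOn
  have hconst : MeasureTheory.IntegrableOn (fun _ : ℝ => ε^2) (Set.Ici a) := by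
    apply MeasureTheory.Integrable.mono hint aestronglyMeasurable_const
    filter_upwards [MeasureTheory.ae_restrict_mem measurableSet_Ici] with x hx
    have h1 := hcon x hx
    have h2 : ε^2 ≤ (ψ x)^2 := by
      rw [← sq_abs (ψ x)]
      exact pow_le_pow_left₀ (le_of_lt hε) h1 2
    rw [Real.norm_eq_abs, Real.norm_eq_abs, abs_of_nonneg (sq_nonneg _),
      abs_of_nonneg (sq_nonneg _)]
    exact h2
  rcases (MeasureTheory.integrableOn_const_iff).mp hconst with h0 | hfin
  · simp at h0; nlinarith
  · rw [Real.volume_Ici] at hfin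
    exact absurd hfin (by simp)

-- ODE uniqueness : double zero forces triviality
lemma zero_of_double_zero (h : Eig lam ψ) {x₀ : ℝ} (h0 : ψ x₀ = 0)
    (h0' : deriv ψ x₀ = 0) : ∀ x, ψ x = 0 := by
  set M : ℝ := 13/4 + |lam| with hM
  have hMpos : 0 < M := by positivity
  set E : ℝ → ℝ := fun x => ψ x * ψ x + deriv ψ x * deriv ψ x with hEdef
  have hEx : ∀ y, E y = ψ y * ψ y + deriv ψ y * deriv ψ y := fun _ => rfl
  have hEnn : ∀ y, 0 ≤ E y := by
    intro y; rw [hEx]; nlinarith [mul_self_nonneg (ψ y), mul_self_nonneg (deriv ψ y)]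
  have hEcont : Continuous E :=
    (h.smooth.continuous.mul h.smooth.continuous).add ((c1 h.smooth).mul (c1 h.smooth))
  have hEd : ∀ x, HasDerivAt E (2*ψ x*deriv ψ x*(1 + Vpot x - lam)) x := by
    intro x
    have h1 := (d1 h.smooth x).fun_mul (d1 h.smooth x)
    have h2 := (d2 h.smooth x).fun_mul (d2 h.smooth x)
    have h3 := h1.fun_add h2
    rw [h.eq] at h3
    refine h3.congr_deriv ?_
    ring
  have hEbound : ∀ x, |2*ψ x*deriv ψ x*(1 + Vpot x - lam)| ≤ M * E x := by
    intro x
    have hV : |1 + Vpot x - lam| ≤ M := by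
      have h1 := Vpot_lb x
      have h2 := Vpot_ub x
      rw [hM, abs_le]
      constructor
      · have := neg_abs_le lam; have := le_abs_self lam; linarith
      · have := neg_abs_le lam; have := le_abs_self lam; linarith
    rw [abs_mul]
    have h2 : |2*ψ x*deriv ψ x| ≤ E x := by
      rw [abs_le, hEx]
      constructor
      · nlinarith [mul_self_nonneg (ψ x + deriv ψ x)]
      · nlinarith [mul_self_nonneg (ψ x - deriv ψ x)]
    have hEnnx := hEnn x
    calc |2*ψ x*deriv ψ x| * |1 + Vpot x - lam| ≤ E x * M :=
          mul_le_mul h2 hV (abs_nonneg _) hEnnx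
      _ = M * E x := by ring
  have hEzero : E x₀ = 0 := by rw [hEx, h0, h0']; ring
  have key : ∀ x, E x = 0 := by
    intro x
    rcases le_or_gt x₀ x with hx | hx
    · set g : ℝ → ℝ := fun t => E t * Real.exp (-M*t) with hgdef
      have hgx : ∀ y, g y = E y * Real.exp (-M*y) := fun _ => rfl
      have hgd : ∀ t, HasDerivAt g
          ((2*ψ t*deriv ψ t*(1 + Vpot t - lam) - M * E t) * Real.exp (-M*t)) t := by
        intro t
        have hlin : HasDerivAt (fun t : ℝ => -M*t) (-M) t := by
          simpa using (hasDerivAt_id t).const_mul (-M)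
        have he := hlin.exp
        have := (hEd t).fun_mul he
        refine this.congr_deriv ?_
        ring
      have hanti : AntitoneOn g (Set.Ici x₀) := by
        apply antitoneOn_of_deriv_nonpos (convex_Ici x₀)
        · exact (hEcont.mul (Real.continuous_exp.comp
            (continuous_const.mul continuous_id))).continuousOn
        · intro t _
          exact ((hgd t).differentiableAt).differentiableWithinAt
        · intro t _
          rw [(hgd t).deriv]
          have h1 := hEbound t
          have h2 := Real.exp_pos (-M*t)
          have h3 := abs_le.mp h1
          nlinarith
      have h4 := hanti (Set.self_mem_Ici) (show x ∈ Set.Ici x₀ from hx) hx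
      have h5 : g x₀ = 0 := by rw [hgx, hEzero]; ring
      have h7 : g x = 0 := le_antisymm (h5 ▸ h4)
        (mul_nonneg (hEnn x) (le_of_lt (Real.exp_pos _)))
      rw [hgx] at h7
      rcases mul_eq_zero.mp h7 with h9 | h9
      · exact h9
      · exact absurd h9 (ne_of_gt (Real.exp_pos _))
    · set g : ℝ → ℝ := fun t => E t * Real.exp (M*t) with hgdef
      have hgx : ∀ y, g y = E y * Real.exp (M*y) := fun _ => rfl
      have hgd : ∀ t, HasDerivAt g
          ((2*ψ t*deriv ψ t*(1 + Vpot t - lam) + M * E t) * Real.exp (M*t)) t := by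
        intro t
        have hlin : HasDerivAt (fun t : ℝ => M*t) M t := by
          simpa using (hasDerivAt_id t).const_mul M
        have he := hlin.exp
        have := (hEd t).fun_mul he
        refine this.congr_deriv ?_
        ring
      have hmono : MonotoneOn g (Set.Iic x₀) := by
        apply monotoneOn_of_deriv_nonneg (convex_Iic x₀)
        · exact (hEcont.mul (Real.continuous_exp.comp
            (continuous_const.mul continuous_id))).continuousOn
        · intro t _
          exact ((hgd t).differentiableAt).differentiableWithinAt
        · intro t _
          rw [(hgd t).deriv]
          have h1 := hEbound t
          have h2 := Real.exp_pos (M*t)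
          have h3 := abs_le.mp h1
          nlinarith
      have h4 := hmono (show x ∈ Set.Iic x₀ from le_of_lt hx) (Set.self_mem_Iic) (le_of_lt hx)
      have h5 : g x₀ = 0 := by rw [hgx, hEzero]; ring
      have h7 : g x = 0 := le_antisymm (h5 ▸ h4)
        (mul_nonneg (hEnn x) (le_of_lt (Real.exp_pos _)))
      rw [hgx] at h7
      rcases mul_eq_zero.mp h7 with h9 | h9
      · exact h9
      · exact absurd h9 (ne_of_gt (Real.exp_pos _))
  intro x
  have hk := key x
  rw [hEx] at hk
  nlinarith [mul_self_nonneg (ψ x), mul_self_nonneg (deriv ψ x)]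

end Eig
namespace Eig
variable {lam : ℝ} {ψ : ℝ → ℝ}

lemma tail_escape (hlam : lam < 0) (h : Eig lam ψ) {x : ℝ} (hx : 103/100 ≤ x)
    (hpos : 0 < ψ x) (hd : 0 ≤ deriv ψ x) : False := by
  obtain ⟨z, hzx, hzs⟩ := h.small x hpos
  set S : Set ℝ := {t | t ∈ Set.Icc x z ∧ deriv ψ t < 0} with hS
  by_cases hSe : S = ∅
  · -- deriv nonneg on [x,z], psi monotone, contradiction with small value
    have hmono : MonotoneOn ψ (Set.Icc x z) := by
      apply monotoneOn_of_deriv_nonneg (convex_Icc x z) h.smooth.continuous.continuousOn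
        (fun t _ => ((d1 h.smooth t).differentiableAt).differentiableWithinAt)
      intro t ht
      rw [interior_Icc] at ht
      by_contra hneg
      push_neg at hneg
      have : t ∈ S := ⟨⟨le_of_lt ht.1, le_of_lt ht.2⟩, hneg⟩
      rw [hSe] at this
      exact this
    have h1 : ψ x ≤ ψ z := hmono (Set.left_mem_Icc.mpr hzx) (Set.right_mem_Icc.mpr hzx) hzx
    have := le_abs_self (ψ z)
    linarith
  · have hSne : S.Nonempty := Set.nonempty_iff_ne_empty.mpr hSe
    have hSbdd : BddBelow S := ⟨x, fun s hs => hs.1.1⟩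
    set t₀ : ℝ := sInf S with ht₀
    have ht₀x : x ≤ t₀ := le_csInf hSne (fun s hs => hs.1.1)
    have ht₀z : t₀ ≤ z := by
      obtain ⟨s, hs⟩ := hSne
      exact le_trans (csInf_le hSbdd hs) hs.1.2
    have hIco : ∀ t ∈ Set.Ico x t₀, 0 ≤ deriv ψ t := by
      intro t ht
      by_contra hneg
      push_neg at hneg
      have : t ∈ S := ⟨⟨ht.1, le_trans (le_of_lt ht.2) ht₀z⟩, hneg⟩
      exact absurd (csInf_le hSbdd this) (not_le.mpr ht.2)
    have hd_t₀ : deriv ψ t₀ ≤ 0 := by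
      by_contra hpos'
      push_neg at hpos'
      have hev : ∀ᶠ y in nhds t₀, 0 < deriv ψ y :=
        ((c1 h.smooth).continuousAt).eventually (eventually_gt_nhds hpos')
      obtain ⟨δ, hδ, hball⟩ := Metric.eventually_nhds_iff.mp hev
      have hlb : ∀ s ∈ S, t₀ + δ/2 ≤ s := by
        intro s hs
        have h1 : t₀ ≤ s := csInf_le hSbdd hs
        by_contra hc
        push_neg at hc
        have : dist s t₀ < δ := by
          rw [Real.dist_eq, abs_of_nonneg (by linarith)]
          linarith
        exact absurd (hball this) (not_lt.mpr (le_of_lt hs.2))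
      have := le_csInf hSne hlb
      linarith
    -- psi >= psi x on [x, t₀]
    have hmono : MonotoneOn ψ (Set.Icc x t₀) := by
      apply monotoneOn_of_deriv_nonneg (convex_Icc x t₀) h.smooth.continuous.continuousOn
        (fun t _ => ((d1 h.smooth t).differentiableAt).differentiableWithinAt)
      intro t ht
      rw [interior_Icc] at ht
      exact hIco t ⟨le_of_lt ht.1, ht.2⟩
    have hge : ∀ t ∈ Set.Icc x t₀, ψ x ≤ ψ t := by
      intro t ht
      exact hmono (Set.left_mem_Icc.mpr ht₀x) ht ht.1
    have hdd_pos : ∀ t ∈ Set.Icc x t₀, 0 < deriv (deriv ψ) t := by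
      intro t ht
      rw [h.eq]
      have hV : 0 ≤ Vpot t := by
        apply Vpot_tail
        rw [abs_of_nonneg (by linarith [ht.1])]
        linarith [ht.1]
      have := hge t ht
      nlinarith
    rcases eq_or_lt_of_le ht₀x with heq0 | hlt
    · -- t₀ = x : use second derivative positivity near x
      have hdx : deriv ψ x = 0 := le_antisymm (heq0 ▸ hd_t₀) hd
      have hev : ∀ᶠ y in nhds x, 0 < deriv (deriv ψ) y :=
        ((c2 h.smooth).continuousAt).eventually
          (eventually_gt_nhds (hdd_pos x (Set.left_mem_Icc.mpr ht₀x)))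
      obtain ⟨δ, hδ, hball⟩ := Metric.eventually_nhds_iff.mp hev
      have hsm : StrictMonoOn (deriv ψ) (Set.Icc x (x + δ/2)) := by
        apply strictMonoOn_of_deriv_pos (convex_Icc _ _) (c1 h.smooth).continuousOn
        intro t ht
        rw [interior_Icc] at ht
        apply hball
        rw [Real.dist_eq, abs_of_nonneg (by linarith [ht.1])]
        linarith [ht.2]
      have hlb : ∀ s ∈ S, x + δ/2 ≤ s := by
        intro s hs
        have h1 : t₀ ≤ s := csInf_le hSbdd hs
        rw [← heq0] at h1
        by_contra hc
        push_neg at hc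
        have h2 : deriv ψ x < deriv ψ s := by
          rcases eq_or_lt_of_le h1 with rfl | hlt2
          · exact absurd hdx (ne_of_lt hs.2)
          · exact hsm (Set.left_mem_Icc.mpr (by linarith))
              ⟨h1, le_of_lt hc⟩ hlt2
        rw [hdx] at h2
        linarith [hs.2]
      have := le_csInf hSne hlb
      linarith
    · -- x < t₀ : deriv psi strictly increases on [x,t₀]
      have hsm : StrictMonoOn (deriv ψ) (Set.Icc x t₀) := by
        apply strictMonoOn_of_deriv_pos (convex_Icc _ _) (c1 h.smooth).continuousOn
        intro t ht
        rw [interior_Icc] at ht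
        exact hdd_pos t ⟨le_of_lt ht.1, le_of_lt ht.2⟩
      have := hsm (Set.left_mem_Icc.mpr (le_of_lt hlt)) (Set.right_mem_Icc.mpr (le_of_lt hlt)) hlt
      linarith

lemma tail_deriv_neg (hlam : lam < 0) (h : Eig lam ψ) {x : ℝ} (hx : 103/100 ≤ x)
    (hpos : 0 < ψ x) : deriv ψ x < 0 := by
  by_contra hc
  push_neg at hc
  exact h.tail_escape hlam hx hpos hc

lemma tail_deriv_pos (hlam : lam < 0) (h : Eig lam ψ) {x : ℝ} (hx : 103/100 ≤ x)
    (hneg : ψ x < 0) : 0 < deriv ψ x := by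
  have := h.neg.tail_deriv_neg hlam hx (by simpa using hneg)
  have e : deriv (fun y => -ψ y) x = -deriv ψ x := deriv.neg
  rw [e] at this
  linarith

lemma tail_no_zero (hlam : lam < 0) (h : Eig lam ψ) (hnz : ∃ w, ψ w ≠ 0) {x : ℝ}
    (hx : 103/100 ≤ x) : ψ x ≠ 0 := by
  intro h0
  rcases lt_trichotomy (deriv ψ x) 0 with hdx | hdx | hdx
  · -- psi decreasing through 0 : just right of x, psi < 0 and deriv < 0; apply to -psi
    have hev : ∀ᶠ y in nhds x, deriv ψ y < 0 :=
      ((c1 h.smooth).continuousAt).eventually (eventually_lt_nhds hdx)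
    obtain ⟨δ, hδ, hball⟩ := Metric.eventually_nhds_iff.mp hev
    have hanti : StrictAntiOn ψ (Set.Icc x (x + δ/2)) := by
      apply strictAntiOn_of_deriv_neg (convex_Icc _ _) h.smooth.continuous.continuousOn
      intro t ht
      rw [interior_Icc] at ht
      apply hball
      rw [Real.dist_eq, abs_of_nonneg (by linarith [ht.1])]
      linarith [ht.2]
    have h1 : ψ (x + δ/2) < 0 := by
      have := hanti (Set.left_mem_Icc.mpr (by linarith)) (Set.right_mem_Icc.mpr (by linarith))
        (by linarith)
      rwa [h0] at this
    have h2 : deriv ψ (x + δ/2) < 0 := hball (by rw [Real.dist_eq]; rw [abs_of_nonneg] <;> linarith)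
    have h3 := h.tail_deriv_pos hlam (by linarith : 103/100 ≤ x + δ/2) h1
    linarith
  · exact absurd (h.zero_of_double_zero h0 hdx) (by push_neg; obtain ⟨w, hw⟩ := hnz; exact ⟨w, hw⟩)
  · have hev : ∀ᶠ y in nhds x, 0 < deriv ψ y :=
      ((c1 h.smooth).continuousAt).eventually (eventually_gt_nhds hdx)
    obtain ⟨δ, hδ, hball⟩ := Metric.eventually_nhds_iff.mp hev
    have hmono : StrictMonoOn ψ (Set.Icc x (x + δ/2)) := by
      apply strictMonoOn_of_deriv_pos (convex_Icc _ _) h.smooth.continuous.continuousOn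
      intro t ht
      rw [interior_Icc] at ht
      apply hball
      rw [Real.dist_eq, abs_of_nonneg (by linarith [ht.1])]
      linarith [ht.2]
    have h1 : 0 < ψ (x + δ/2) := by
      have := hmono (Set.left_mem_Icc.mpr (by linarith)) (Set.right_mem_Icc.mpr (by linarith))
        (by linarith)
      rwa [h0] at this
    have h2 : 0 < deriv ψ (x + δ/2) := hball (by rw [Real.dist_eq]; rw [abs_of_nonneg] <;> linarith)
    exact h.tail_escape hlam (by linarith : 103/100 ≤ x + δ/2) h1 (le_of_lt h2)

end Eig
namespace Eig
variable {lam : ℝ} {ψ : ℝ → ℝ}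

lemma left_deriv_pos (hlam : lam < 0) (h : Eig lam ψ) {x : ℝ} (hx : x ≤ -(103/100))
    (hpos : 0 < ψ x) : 0 < deriv ψ x := by
  have h1 := h.refl.tail_deriv_neg hlam (x := -x) (by linarith) (by simpa using hpos)
  have e : deriv (fun y => ψ (-y)) (-x) = -deriv ψ x := by
    rw [deriv_comp_neg ψ (-x), neg_neg]
  rw [e] at h1
  linarith

lemma left_deriv_neg (hlam : lam < 0) (h : Eig lam ψ) {x : ℝ} (hx : x ≤ -(103/100))
    (hneg : ψ x < 0) : deriv ψ x < 0 := by
  have h1 := h.neg.left_deriv_pos hlam hx (by simpa using hneg)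
  have e : deriv (fun y => -ψ y) x = -deriv ψ x := deriv.neg
  rw [e] at h1
  linarith

lemma left_no_zero (hlam : lam < 0) (h : Eig lam ψ) (hnz : ∃ w, ψ w ≠ 0) {x : ℝ}
    (hx : x ≤ -(103/100)) : ψ x ≠ 0 := by
  intro h0
  obtain ⟨w, hw⟩ := hnz
  have h1 := h.refl.tail_no_zero hlam ⟨-w, by simpa using hw⟩ (x := -x) (by linarith)
  exact h1 (by simpa using h0)

lemma decay_right_pos (hlam : lam < 0) (h : Eig lam ψ)
    (hsign : ∀ t, 103/100 ≤ t → 0 < ψ t) :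
    Filter.Tendsto ψ Filter.atTop (nhds 0) ∧
      Filter.Tendsto (deriv ψ) Filter.atTop (nhds 0) := by
  have hd : ∀ t, 103/100 ≤ t → deriv ψ t < 0 :=
    fun t ht => h.tail_deriv_neg hlam ht (hsign t ht)
  have hanti : AntitoneOn ψ (Set.Ici (103/100 : ℝ)) := by
    apply antitoneOn_of_deriv_nonpos (convex_Ici _) h.smooth.continuous.continuousOn
      (fun t _ => ((d1 h.smooth t).differentiableAt).differentiableWithinAt)
    intro t ht
    rw [interior_Ici] at ht
    exact le_of_lt (hd t (le_of_lt ht))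
  constructor
  · rw [Metric.tendsto_atTop]
    intro ε hε
    obtain ⟨x₀, hx₀, hx₀s⟩ := h.small (103/100) hε
    refine ⟨x₀, fun t ht => ?_⟩
    rw [Real.dist_eq, sub_zero]
    have h1 : ψ t ≤ ψ x₀ := hanti (Set.mem_Ici.mpr hx₀) (Set.mem_Ici.mpr (by linarith)) ht
    have h2 : 0 < ψ t := hsign t (by linarith)
    rw [abs_of_pos h2]
    calc ψ t ≤ ψ x₀ := h1
      _ ≤ |ψ x₀| := le_abs_self _
      _ < ε := hx₀s
  · have hmonoOn : MonotoneOn (deriv ψ) (Set.Ici (103/100 : ℝ)) := by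
      apply monotoneOn_of_deriv_nonneg (convex_Ici _) (c1 h.smooth).continuousOn
        (fun t _ => ((d2 h.smooth t).differentiableAt).differentiableWithinAt)
      intro t ht
      rw [interior_Ici] at ht
      have ht' : (103/100:ℝ) < t := ht
      rw [h.eq]
      have hV : 0 ≤ Vpot t := Vpot_tail t (by rw [abs_of_pos (by linarith)]; linarith)
      have := hsign t (le_of_lt ht')
      nlinarith
    set g : ℝ → ℝ := fun t => deriv ψ (max t (103/100)) with hgdef
    have hgx : ∀ t, g t = deriv ψ (max t (103/100)) := fun _ => rfl
    have hgmono : Monotone g := by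
      intro s t hst
      exact hmonoOn (Set.mem_Ici.mpr (le_max_right _ _)) (Set.mem_Ici.mpr (le_max_right _ _))
        (max_le_max hst (le_refl _))
    have hgneg : ∀ t, g t < 0 := fun t => hd _ (le_max_right _ _)
    have hbdd : BddAbove (Set.range g) := ⟨0, by rintro y ⟨t, rfl⟩; exact le_of_lt (hgneg t)⟩
    have htend : Filter.Tendsto g Filter.atTop (nhds (⨆ t, g t)) :=
      tendsto_atTop_ciSup hgmono hbdd
    have hl_le : (⨆ t, g t) ≤ 0 := ciSup_le fun t => le_of_lt (hgneg t)
    have hl_eq : (⨆ t, g t) = 0 := by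
      by_contra hne
      have hl : (⨆ t, g t) < 0 := lt_of_le_of_ne hl_le hne
      set k : ℝ := -(⨆ t, g t) with hk
      have hkpos : 0 < k := by rw [hk]; linarith
      have hle : ∀ t, 103/100 ≤ t → deriv ψ t ≤ -k := by
        intro t ht
        have h1 : g t ≤ ⨆ t, g t := le_ciSup hbdd t
        rw [hgx, max_eq_left ht] at h1
        rw [hk]; linarith
      -- linear escape
      set u : ℝ → ℝ := fun t => ψ t + k * t with hu
      have hud : ∀ t, HasDerivAt u (deriv ψ t + k) t := by
        intro t
        exact (d1 h.smooth t).add (by simpa using (hasDerivAt_id t).const_mul k)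
      have huanti : AntitoneOn u (Set.Ici (103/100 : ℝ)) := by
        apply antitoneOn_of_deriv_nonpos (convex_Ici _)
          (Continuous.continuousOn (by
            exact h.smooth.continuous.add (continuous_const.mul continuous_id)))
          (fun t _ => ((hud t).differentiableAt).differentiableWithinAt)
        intro t ht
        rw [interior_Ici] at ht
        rw [(hud t).deriv]
        have := hle t (le_of_lt ht)
        linarith
      set t₁ : ℝ := 103/100 + ψ (103/100) / k + 1 with ht₁
      have ht₁b : 103/100 ≤ t₁ := by
        have : 0 ≤ ψ (103/100) / k := div_nonneg (le_of_lt (hsign _ (le_refl _))) (le_of_lt hkpos)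
        rw [ht₁]; linarith
      have h1 : u t₁ ≤ u (103/100) := huanti (Set.mem_Ici.mpr (le_refl _))
        (Set.mem_Ici.mpr ht₁b) ht₁b
      have h2 : u t₁ = ψ t₁ + k * t₁ := rfl
      have h3 : u (103/100) = ψ (103/100) + k * (103/100) := rfl
      have h4 : k * (ψ (103/100) / k) = ψ (103/100) := by
        field_simp
      have h5 := hsign t₁ ht₁b
      rw [h2, h3, ht₁] at h1
      nlinarith [h1, h4, h5, hkpos]
    rw [hl_eq] at htend
    apply htend.congr'
    filter_upwards [Filter.eventually_ge_atTop (103/100 : ℝ)] with t ht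
    rw [hgx, max_eq_left ht]

lemma decay_right (hlam : lam < 0) (h : Eig lam ψ) (hnz : ∃ w, ψ w ≠ 0) :
    Filter.Tendsto ψ Filter.atTop (nhds 0) ∧
      Filter.Tendsto (deriv ψ) Filter.atTop (nhds 0) := by
  have hb := h.tail_no_zero hlam hnz (le_refl (103/100 : ℝ))
  have hdich : (∀ t, 103/100 ≤ t → 0 < ψ t) ∨ (∀ t, 103/100 ≤ t → ψ t < 0) := by
    rcases lt_or_gt_of_ne hb with hneg | hpos
    · right
      intro t ht
      rcases lt_trichotomy (ψ t) 0 with h1 | h1 | h1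
      · exact h1
      · exact absurd h1 (h.tail_no_zero hlam hnz ht)
      · exfalso
        obtain ⟨c, hc, hc0⟩ := intermediate_value_Icc ht h.smooth.continuous.continuousOn
          (show (0:ℝ) ∈ Set.Icc (ψ (103/100)) (ψ t) from ⟨le_of_lt hneg, le_of_lt h1⟩)
        exact (h.tail_no_zero hlam hnz hc.1) hc0
    · left
      intro t ht
      rcases lt_trichotomy (ψ t) 0 with h1 | h1 | h1
      · exfalso
        obtain ⟨c, hc, hc0⟩ := intermediate_value_Icc' ht h.smooth.continuous.continuousOn
          (show (0:ℝ) ∈ Set.Icc (ψ t) (ψ (103/100)) from ⟨le_of_lt h1, le_of_lt hpos⟩)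
        exact (h.tail_no_zero hlam hnz hc.1) hc0
      · exact absurd h1 (h.tail_no_zero hlam hnz ht)
      · exact h1
  rcases hdich with hpos | hneg
  · exact h.decay_right_pos hlam hpos
  · have hres := h.neg.decay_right_pos hlam (fun t ht => by simpa using hneg t ht)
    constructor
    · have := hres.1.neg
      simpa using this
    · have e : (deriv fun y => -ψ y) = fun y => -deriv ψ y := deriv.neg'
      rw [e] at hres
      have := hres.2.neg
      simpa using this

lemma decay_left (hlam : lam < 0) (h : Eig lam ψ) (hnz : ∃ w, ψ w ≠ 0) :
    Filter.Tendsto ψ Filter.atBot (nhds 0) ∧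
      Filter.Tendsto (deriv ψ) Filter.atBot (nhds 0) := by
  obtain ⟨w, hw⟩ := hnz
  have hres := h.refl.decay_right hlam ⟨-w, by simpa using hw⟩
  constructor
  · have h1 := hres.1.comp tendsto_neg_atBot_atTop
    exact h1.congr (fun x => by simp)
  · have e : (deriv fun y => ψ (-y)) = fun y => -deriv ψ (-y) :=
      funext fun y => deriv_comp_neg ψ y
    rw [e] at hres
    have h2 := hres.2.neg
    simp only [neg_neg, neg_zero] at h2
    have h3 := h2.comp tendsto_neg_atBot_atTop
    exact h3.congr (fun x => by simp)

end Eig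
section Ground
variable {φ₀ : ℝ → ℝ} {μ₀ : ℝ} {lam : ℝ} {ψ : ℝ → ℝ}

lemma ratio_const (hφC2 : ContDiff ℝ 2 φ₀) (hφpos : ∀ x, 0 < φ₀ x)
    (hψC2 : ContDiff ℝ 2 ψ)
    (hW : ∀ x, φ₀ x * deriv ψ x - deriv φ₀ x * ψ x = 0) :
    ∃ c : ℝ, ∀ x, ψ x = c * φ₀ x := by
  set q : ℝ → ℝ := fun x => ψ x / φ₀ x with hq
  have hqd : ∀ x, HasDerivAt q 0 x := by
    intro x
    have h1 : HasDerivAt q ((deriv ψ x * φ₀ x - ψ x * deriv φ₀ x)/(φ₀ x)^2) x :=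
      (d1 hψC2 x).div (d1 hφC2 x) (ne_of_gt (hφpos x))
    have h2 : (deriv ψ x * φ₀ x - ψ x * deriv φ₀ x) = 0 := by
      have := hW x; linarith [this]
    rwa [h2, zero_div] at h1
  have hconst : ∀ x y : ℝ, q x = q y :=
    is_const_of_deriv_eq_zero (fun x => (hqd x).differentiableAt) (fun x => (hqd x).deriv)
  refine ⟨ψ 0 / φ₀ 0, fun x => ?_⟩
  have h1 : q x = q 0 := hconst x 0
  have h2 : ψ x / φ₀ x = ψ 0 / φ₀ 0 := h1
  rw [div_eq_div_iff (ne_of_gt (hφpos x)) (ne_of_gt (hφpos 0))] at h2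
  rw [div_mul_eq_mul_div, eq_div_iff (ne_of_gt (hφpos 0))]
  linarith [h2]

lemma wronskian_hasDeriv (hφC2 : ContDiff ℝ 2 φ₀)
    (hφeq : ∀ x, deriv (deriv φ₀) x = (Vpot x + μ₀^2) * φ₀ x)
    (h : Eig lam ψ) (x : ℝ) :
    HasDerivAt (fun y => φ₀ y * deriv ψ y - deriv φ₀ y * ψ y)
      (-(lam + μ₀^2) * (φ₀ x * ψ x)) x := by
  have h1 := ((d1 hφC2 x).fun_mul (d2 h.smooth x)).fun_sub ((d2 hφC2 x).fun_mul (d1 h.smooth x))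
  rw [h.eq, hφeq] at h1
  refine h1.congr_deriv ?_
  ring

lemma wronskian_zero (hφC2 : ContDiff ℝ 2 φ₀) (hφpos : ∀ x, 0 < φ₀ x)
    (hφL2 : MeasureTheory.Integrable (fun x => (φ₀ x)^2))
    (hμ : 0 < μ₀)
    (hφeq : ∀ x, deriv (deriv φ₀) x = (Vpot x + μ₀^2) * φ₀ x)
    (hlam : lam < 0) (h : Eig lam ψ) (hnz : ∃ w, ψ w ≠ 0)
    (hge : ∀ x, 0 ≤ ψ x) :
    ∀ x, φ₀ x * deriv ψ x - deriv φ₀ x * ψ x = 0 := by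
  have hφeig : Eig (-μ₀^2) φ₀ := ⟨hφC2, hφL2, fun x => by rw [hφeq]; ring⟩
  have hφnz : ∃ w, φ₀ w ≠ 0 := ⟨0, ne_of_gt (hφpos 0)⟩
  have hφlam : -μ₀^2 < 0 := by nlinarith
  have hφdecT := hφeig.decay_right hφlam hφnz
  have hφdecB := hφeig.decay_left hφlam hφnz
  have hψdecT := h.decay_right hlam hnz
  have hψdecB := h.decay_left hlam hnz
  set W : ℝ → ℝ := fun y => φ₀ y * deriv ψ y - deriv φ₀ y * ψ y with hWdef
  have hWd : ∀ x, HasDerivAt W (-(lam + μ₀^2) * (φ₀ x * ψ x)) x :=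
    wronskian_hasDeriv hφC2 hφeq h
  have hWT : Filter.Tendsto W Filter.atTop (nhds 0) := by
    have := (hφdecT.1.mul hψdecT.2).sub (hφdecT.2.mul hψdecT.1)
    simpa using this
  have hWB : Filter.Tendsto W Filter.atBot (nhds 0) := by
    have := (hφdecB.1.mul hψdecB.2).sub (hφdecB.2.mul hψdecB.1)
    simpa using this
  have hWdiff : Differentiable ℝ W := fun x => (hWd x).differentiableAt
  rcases le_or_gt 0 (lam + μ₀^2) with hκ | hκ
  · -- W antitone
    have hanti : Antitone W := by
      apply antitone_of_deriv_nonpos hWdiff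
      intro x
      rw [(hWd x).deriv]
      have h1 := hφpos x
      have h2 := hge x
      nlinarith [mul_nonneg hκ (mul_nonneg (le_of_lt h1) h2)]
    intro x
    have h1 : (0:ℝ) ≤ W x := hanti.le_of_tendsto hWT x
    have h2 : W x ≤ 0 := hanti.ge_of_tendsto hWB x
    have h3 : W x = φ₀ x * deriv ψ x - deriv φ₀ x * ψ x := rfl
    linarith
  · have hmono : Monotone W := by
      apply monotone_of_deriv_nonneg hWdiff
      intro x
      rw [(hWd x).deriv]
      have h1 := hφpos x
      have h2 := hge x
      nlinarith [mul_nonneg (le_of_lt (neg_pos.mpr hκ)) (mul_nonneg (le_of_lt h1) h2)]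
    intro x
    have h1 : W x ≤ 0 := hmono.ge_of_tendsto hWT x
    have h2 : (0:ℝ) ≤ W x := hmono.le_of_tendsto hWB x
    have h3 : W x = φ₀ x * deriv ψ x - deriv φ₀ x * ψ x := rfl
    linarith

lemma exists_neg_value (hφC2 : ContDiff ℝ 2 φ₀) (hφpos : ∀ x, 0 < φ₀ x)
    (hφL2 : MeasureTheory.Integrable (fun x => (φ₀ x)^2))
    (hμ : 0 < μ₀)
    (hφeq : ∀ x, deriv (deriv φ₀) x = (Vpot x + μ₀^2) * φ₀ x)
    (hlam : lam < 0) (hne : lam ≠ -μ₀^2) (h : Eig lam ψ) (hnz : ∃ w, ψ w ≠ 0) :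
    ∃ u, ψ u < 0 := by
  by_contra hcon
  push_neg at hcon
  have hW := wronskian_zero hφC2 hφpos hφL2 hμ hφeq hlam h hnz hcon
  obtain ⟨c, hc⟩ := ratio_const hφC2 hφpos h.smooth hW
  have hψfun : ψ = fun x => c * φ₀ x := funext hc
  have hd1 : deriv ψ = fun x => c * deriv φ₀ x := by
    rw [hψfun]
    funext x
    exact deriv_const_mul c ((d1 hφC2 x).differentiableAt)
  have hd2 : deriv (deriv ψ) 0 = c * deriv (deriv φ₀) 0 := by
    rw [hd1]
    exact deriv_const_mul c ((d2 hφC2 0).differentiableAt)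
  have he := h.eq 0
  rw [hd2, hφeq, hc 0] at he
  have hc0 : c = 0 := by
    have h1 := hφpos 0
    rcases mul_eq_zero.mp (show c * ((lam + μ₀^2) * φ₀ 0) = 0 by nlinarith [he]) with h2 | h2
    · exact h2
    · rcases mul_eq_zero.mp h2 with h3 | h3
      · exact absurd h3 (fun hh => hne (by linarith))
      · exact absurd h3 (ne_of_gt h1)
  obtain ⟨w, hw⟩ := hnz
  exact hw (by rw [hc w, hc0, zero_mul])

end Ground
section Slope
variable {ψ : ℝ → ℝ}

lemma deriv_nonneg_right (hC2 : ContDiff ℝ 2 ψ) {x₁ : ℝ} (h0 : ψ x₁ = 0)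
    (hp : ∀ t, x₁ < t → 0 < ψ t) : 0 ≤ deriv ψ x₁ := by
  have hd := hasDerivAt_iff_tendsto_slope.mp (d1 hC2 x₁)
  have hd2 : Filter.Tendsto (slope ψ x₁) (nhdsWithin x₁ (Set.Ioi x₁)) (nhds (deriv ψ x₁)) :=
    hd.mono_left (nhdsWithin_mono x₁ (fun y hy => ne_of_gt hy))
  refine ge_of_tendsto hd2 ?_
  filter_upwards [eventually_mem_nhdsWithin] with y hy
  rw [slope_def_field]
  have hy' : x₁ < y := hy
  have h1 : 0 < ψ y := hp y hy'
  rw [h0, sub_zero]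
  apply div_nonneg <;> linarith

lemma deriv_nonpos_left (hC2 : ContDiff ℝ 2 ψ) {x₂ : ℝ} (h0 : ψ x₂ = 0)
    (hp : ∀ t, t < x₂ → 0 < ψ t) : deriv ψ x₂ ≤ 0 := by
  have hd := hasDerivAt_iff_tendsto_slope.mp (d1 hC2 x₂)
  have hd2 : Filter.Tendsto (slope ψ x₂) (nhdsWithin x₂ (Set.Iio x₂)) (nhds (deriv ψ x₂)) :=
    hd.mono_left (nhdsWithin_mono x₂ (fun y hy => ne_of_lt hy))
  refine le_of_tendsto hd2 ?_
  filter_upwards [eventually_mem_nhdsWithin] with y hy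
  rw [slope_def_field]
  have hy' : y < x₂ := hy
  have h1 : 0 < ψ y := hp y hy'
  rw [h0, sub_zero]
  exact div_nonpos_of_nonneg_of_nonpos (by linarith) (by linarith)

end Slope

namespace Eig
variable {lam : ℝ} {ψ : ℝ → ℝ}

lemma nodal_right (hlam : lam < 0) (h : Eig lam ψ) {x₁ : ℝ} (hx₁ : 0 ≤ x₁)
    (h0 : ψ x₁ = 0) (hp : ∀ t, x₁ < t → 0 < ψ t) : False := by
  have hnz : ∃ w, ψ w ≠ 0 := ⟨x₁ + 1, ne_of_gt (hp _ (by linarith))⟩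
  have hx₁b : x₁ < 103/100 := by
    by_contra hc
    push_neg at hc
    exact (h.tail_no_zero hlam hnz hc) h0
  have hψb : 0 < ψ (103/100) := hp _ hx₁b
  have hdb : deriv ψ (103/100) < 0 := h.tail_deriv_neg hlam (le_refl _) hψb
  have hslope : 0 ≤ deriv ψ x₁ := deriv_nonneg_right h.smooth h0 hp
  set Z : ℝ → ℝ := fun t => Real.sin (3/2*t) * deriv ψ t - (3/2 * Real.cos (3/2*t)) * ψ t
    with hZdef
  have hZx : ∀ t, Z t = Real.sin (3/2*t) * deriv ψ t - (3/2 * Real.cos (3/2*t)) * ψ t :=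
    fun _ => rfl
  have hZd : ∀ t, HasDerivAt Z
      (Real.sin (3/2*t) * (deriv (deriv ψ) t + 9/4 * ψ t)) t := by
    intro t
    have hlin : HasDerivAt (fun t : ℝ => 3/2*t) (3/2) t := by
      simpa using (hasDerivAt_id t).const_mul (3/2:ℝ)
    have hs : HasDerivAt (fun t : ℝ => Real.sin (3/2*t)) (Real.cos (3/2*t) * (3/2)) t :=
      (Real.hasDerivAt_sin (3/2*t)).comp t hlin
    have hc : HasDerivAt (fun t : ℝ => Real.cos (3/2*t)) (-Real.sin (3/2*t) * (3/2)) t :=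
      (Real.hasDerivAt_cos (3/2*t)).comp t hlin
    have h1 := (hs.fun_mul (d2 h.smooth t)).fun_sub ((hc.const_mul (3/2)).fun_mul (d1 h.smooth t))
    refine h1.congr_deriv ?_
    ring
  have hZcont : Continuous Z := by
    have hc1 := c1 h.smooth
    have hc0 := h.smooth.continuous
    exact ((Real.continuous_sin.comp (continuous_const.mul continuous_id)).mul hc1).sub
      ((continuous_const.mul (Real.continuous_cos.comp (continuous_const.mul continuous_id))).mul hc0)
  have hpi : (3.14:ℝ) < Real.pi := Real.pi_gt_d2
  have hmono : StrictMonoOn Z (Set.Icc x₁ (103/100)) := by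
    apply strictMonoOn_of_deriv_pos (convex_Icc _ _) hZcont.continuousOn
    intro t ht
    rw [interior_Icc] at ht
    rw [(hZd t).deriv, h.eq]
    have hsin : 0 < Real.sin (3/2*t) := by
      apply Real.sin_pos_of_pos_of_lt_pi
      · nlinarith [ht.1, hx₁]
      · nlinarith [ht.2]
    have hψt : 0 < ψ t := hp t ht.1
    have hV := Vpot_lb t
    nlinarith [mul_pos hsin hψt]
  have hZ1 : 0 ≤ Z x₁ := by
    rw [hZx, h0]
    have hsin : 0 ≤ Real.sin (3/2*x₁) := by
      apply Real.sin_nonneg_of_nonneg_of_le_pi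
      · linarith
      · nlinarith
    nlinarith [mul_nonneg hsin hslope]
  have hZb : Z (103/100) < 0 := by
    rw [hZx]
    have hsin : 0 < Real.sin (3/2*(103/100)) := by
      apply Real.sin_pos_of_pos_of_lt_pi <;> nlinarith
    have hcos : 0 < Real.cos (3/2*(103/100)) := by
      apply Real.cos_pos_of_mem_Ioo
      constructor <;> [nlinarith; nlinarith]
    nlinarith [mul_pos hsin (neg_pos.mpr hdb), mul_pos (mul_pos hcos hψb) (show (0:ℝ) < 3/2 by norm_num)]
  have hfin := hmono (Set.left_mem_Icc.mpr (le_of_lt hx₁b)) (Set.right_mem_Icc.mpr (le_of_lt hx₁b)) hx₁b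
  exact absurd (lt_of_le_of_lt hZ1 (lt_trans hfin hZb)) (lt_irrefl 0)

end Eig

lemma sign_dichotomy {ψ : ℝ → ℝ} (hcont : Continuous ψ) {a : ℝ}
    (hno : ∀ t, a < t → ψ t ≠ 0) (hpos : 0 < ψ (a+1)) : ∀ t, a < t → 0 < ψ t := by
  intro t ht
  rcases lt_trichotomy (ψ t) 0 with h1 | h1 | h1
  · exfalso
    obtain ⟨c, hc, hc0⟩ := intermediate_value_uIcc (a := t) (b := a+1)
      hcont.continuousOn (show (0:ℝ) ∈ Set.uIcc (ψ t) (ψ (a+1)) from by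
        rw [Set.mem_uIcc]; left; exact ⟨le_of_lt h1, le_of_lt hpos⟩)
    have hc' : a < c := by
      rcases Set.mem_uIcc.mp hc with h2 | h2
      · linarith [h2.1]
      · linarith [h2.1]
    exact (hno c hc') hc0
  · exact absurd h1 (hno t ht)
  · exact h1
section Main
variable {φ₀ : ℝ → ℝ} {μ₀ : ℝ} {lam : ℝ} {ψ : ℝ → ℝ}

lemma no_eigenfunction (hφC2 : ContDiff ℝ 2 φ₀) (hφpos : ∀ x, 0 < φ₀ x)
    (hφL2 : MeasureTheory.Integrable (fun x => (φ₀ x)^2)) (hμ : 0 < μ₀)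
    (hφeq : ∀ x, deriv (deriv φ₀) x = (Vpot x + μ₀^2) * φ₀ x)
    (hlam : lam < 0) (hne : lam ≠ -μ₀^2) (h : Eig lam ψ) : ∀ x, ψ x = 0 := by
  by_contra hcon
  push_neg at hcon
  obtain ⟨x₀, hx₀⟩ := hcon
  have hnz : ∃ w, ψ w ≠ 0 := ⟨x₀, hx₀⟩
  have hnzneg : ∃ w, (fun y => -ψ y) w ≠ 0 := ⟨x₀, by simpa using hx₀⟩
  obtain ⟨u, hu⟩ := exists_neg_value hφC2 hφpos hφL2 hμ hφeq hlam hne h hnz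
  obtain ⟨v, hv'⟩ := exists_neg_value hφC2 hφpos hφL2 hμ hφeq hlam hne h.neg hnzneg
  have hv : 0 < ψ v := by simpa using hv'
  -- a zero exists
  obtain ⟨c0, _, hc0⟩ := intermediate_value_uIcc (a := u) (b := v)
    h.smooth.continuous.continuousOn
    (show (0:ℝ) ∈ Set.uIcc (ψ u) (ψ v) from by
      rw [Set.mem_uIcc]; left; exact ⟨le_of_lt hu, le_of_lt hv⟩)
  set Zs : Set ℝ := {t | ψ t = 0} with hZs
  have hZne : Zs.Nonempty := ⟨c0, hc0⟩
  have hZsub : Zs ⊆ Set.Icc (-(103/100)) (103/100) := by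
    intro t ht
    constructor
    · by_contra hc
      push_neg at hc
      exact (Eig.left_no_zero hlam h hnz (le_of_lt hc)) ht
    · by_contra hc
      push_neg at hc
      exact (Eig.tail_no_zero hlam h hnz (le_of_lt hc)) ht
  have hZclosed : IsClosed Zs := isClosed_singleton.preimage h.smooth.continuous
  have hZcpt : IsCompact Zs := IsCompact.of_isClosed_subset isCompact_Icc hZclosed hZsub
  set x₁ : ℝ := sSup Zs with hx₁def
  have hx₁mem : x₁ ∈ Zs := hZcpt.sSup_mem hZne
  have hnoright : ∀ t, x₁ < t → ψ t ≠ 0 := by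
    intro t ht hzero
    exact absurd (le_csSup hZcpt.bddAbove (show t ∈ Zs from hzero)) (not_le.mpr ht)
  rcases le_or_gt 0 x₁ with hx₁0 | hx₁0
  · -- right node at x₁ ≥ 0
    rcases (hnoright (x₁+1) (by linarith)).lt_or_gt with hneg1 | hpos1
    · -- psi negative to the right : use -psi
      have hno' : ∀ t, x₁ < t → (fun y => -ψ y) t ≠ 0 := by
        intro t ht
        simpa using hnoright t ht
      have hp := sign_dichotomy (h.smooth.continuous.neg) hno' (by simpa using hneg1)
      exact h.neg.nodal_right hlam hx₁0 (by simpa using (show ψ x₁ = 0 from hx₁mem)) hp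
    · have hp := sign_dichotomy h.smooth.continuous hnoright hpos1
      exact h.nodal_right hlam hx₁0 hx₁mem hp
  · -- all zeros below 0 : reflect
    set x₂ : ℝ := sInf Zs with hx₂def
    have hx₂mem : x₂ ∈ Zs := hZcpt.sInf_mem hZne
    have hx₂le : x₂ ≤ x₁ := csInf_le_csSup hZne hZcpt.bddBelow hZcpt.bddAbove
    have hx₂0 : x₂ < 0 := lt_of_le_of_lt hx₂le hx₁0
    have hnoleft : ∀ t, -x₂ < t → ψ (-t) ≠ 0 := by
      intro t ht hzero
      have h1 : (-t : ℝ) ∈ Zs := hzero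
      have := csInf_le hZcpt.bddBelow h1
      linarith
    rcases (hnoleft (-x₂+1) (by linarith)).lt_or_gt with hneg1 | hpos1
    · have hno' : ∀ t, -x₂ < t → (fun y => -ψ (-y)) t ≠ 0 := by
        intro t ht
        simpa using hnoleft t ht
      have hp := sign_dichotomy (ψ := fun y => -ψ (-y))
        (h.smooth.continuous.comp (continuous_id.neg)).neg hno' (by simpa using hneg1)
      refine h.refl.neg.nodal_right hlam (le_of_lt (by linarith : (0:ℝ) < -x₂)) ?_ hp
      simpa using (show ψ x₂ = 0 from hx₂mem)
    · have hno' : ∀ t, -x₂ < t → (fun y => ψ (-y)) t ≠ 0 := fun t ht => hnoleft t ht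
      have hp := sign_dichotomy (ψ := fun y => ψ (-y))
        (h.smooth.continuous.comp (continuous_id.neg)) hno' hpos1
      refine h.refl.nodal_right hlam (le_of_lt (by linarith : (0:ℝ) < -x₂)) ?_ hp
      simpa using (show ψ x₂ = 0 from hx₂mem)

lemma ground_multiple (hφC2 : ContDiff ℝ 2 φ₀) (hφpos : ∀ x, 0 < φ₀ x)
    (hφL2 : MeasureTheory.Integrable (fun x => (φ₀ x)^2)) (hμ : 0 < μ₀)
    (hφeq : ∀ x, deriv (deriv φ₀) x = (Vpot x + μ₀^2) * φ₀ x)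
    (h : Eig (-μ₀^2) ψ) : ∃ c : ℝ, ∀ x, ψ x = c * φ₀ x := by
  by_cases hz : ∀ x, ψ x = 0
  · exact ⟨0, fun x => by rw [hz x, zero_mul]⟩
  · push_neg at hz
    obtain ⟨w, hw⟩ := hz
    have hnz : ∃ w, ψ w ≠ 0 := ⟨w, hw⟩
    have hlam : -μ₀^2 < 0 := by nlinarith
    set W : ℝ → ℝ := fun y => φ₀ y * deriv ψ y - deriv φ₀ y * ψ y with hWdef
    have hWd : ∀ x, HasDerivAt W 0 x := by
      intro x
      have h1 := wronskian_hasDeriv hφC2 hφeq h x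
      have h2 : (-(-μ₀^2 + μ₀^2) * (φ₀ x * ψ x)) = 0 := by ring
      rwa [h2] at h1
    have hWconst : ∀ x, W x = W 0 :=
      fun x => is_const_of_deriv_eq_zero (fun y => (hWd y).differentiableAt)
        (fun y => (hWd y).deriv) x 0
    have hφeig : Eig (-μ₀^2) φ₀ := ⟨hφC2, hφL2, fun x => by rw [hφeq]; ring⟩
    have hφdecT := hφeig.decay_right hlam ⟨0, ne_of_gt (hφpos 0)⟩
    have hψdecT := h.decay_right hlam hnz
    have hWT : Filter.Tendsto W Filter.atTop (nhds 0) := by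
      have := (hφdecT.1.mul hψdecT.2).sub (hφdecT.2.mul hψdecT.1)
      simpa using this
    have hW0 : W 0 = 0 := by
      have h1 : Filter.Tendsto W Filter.atTop (nhds (W 0)) := by
        apply Filter.Tendsto.congr' _ tendsto_const_nhds
        filter_upwards with t
        exact (hWconst t).symm
      exact tendsto_nhds_unique h1 hWT
    have hW : ∀ x, φ₀ x * deriv ψ x - deriv φ₀ x * ψ x = 0 := by
      intro x
      have := hWconst x
      rw [hW0] at this
      exact this
    exact ratio_const hφC2 hφpos h.smooth hW

end Main
/-- `−μ₀²` is the unique negative eigenvalue of `L`, it is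
simple, and the ground state is even with odd derivative. -/
theorem unique_negative_eigenvalue (φ₀ : ℝ → ℝ) (μ₀ : ℝ)
    (hC2 : ContDiff ℝ 2 φ₀) (hpos : ∀ x : ℝ, 0 < φ₀ x)
    (hL2 : Integrable (fun x => (φ₀ x)^2))
    (hμ1 : (0.808:ℝ) ≤ μ₀) (hμ2 : μ₀ ≤ (0.883:ℝ))
    (heq : ∀ x : ℝ, -(deriv (deriv φ₀) x) + Vpot x * φ₀ x = -μ₀^2 * φ₀ x) :
    (∀ lam : ℝ, lam < 0 → lam ≠ -μ₀^2 →
      ∀ ψ : ℝ → ℝ, ContDiff ℝ 2 ψ → Integrable (fun x => (ψ x)^2) →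
        (∀ x : ℝ, -(deriv (deriv ψ) x) + Vpot x * ψ x = lam * ψ x) →
        ∀ x : ℝ, ψ x = 0) ∧
    (∀ ψ : ℝ → ℝ, ContDiff ℝ 2 ψ → Integrable (fun x => (ψ x)^2) →
      (∀ x : ℝ, -(deriv (deriv ψ) x) + Vpot x * ψ x = -μ₀^2 * ψ x) →
      ∃ c : ℝ, ψ = fun x => c * φ₀ x) ∧
    (∀ x : ℝ, φ₀ (-x) = φ₀ x) ∧
    (∀ x : ℝ, deriv φ₀ (-x) = -deriv φ₀ x) := by
  have hμ : 0 < μ₀ := lt_of_lt_of_le (by norm_num) hμ1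
  have hφeq : ∀ x, deriv (deriv φ₀) x = (Vpot x + μ₀^2) * φ₀ x := by
    intro x
    linear_combination -heq x
  have hg : Eig (-μ₀^2) φ₀ := ⟨hC2, hL2, fun x => by rw [hφeq]; ring⟩
  have heven : ∀ x : ℝ, φ₀ (-x) = φ₀ x := by
    obtain ⟨c, hc⟩ := ground_multiple hC2 hpos hL2 hμ hφeq hg.refl
    have h0 := hc 0
    simp only [neg_zero] at h0
    have hc1 : c = 1 := by
      have h1 := hpos 0
      nlinarith [h0]
    intro x
    have h2 := hc x
    rw [hc1, one_mul] at h2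
    exact h2
  refine ⟨?_, ?_, heven, ?_⟩
  · intro lam hlam hne ψ hC2ψ hL2ψ heqψ
    have h : Eig lam ψ := ⟨hC2ψ, hL2ψ, fun x => by linear_combination -heqψ x⟩
    exact no_eigenfunction hC2 hpos hL2 hμ hφeq hlam hne h
  · intro ψ hC2ψ hL2ψ heqψ
    have h : Eig (-μ₀^2) ψ := ⟨hC2ψ, hL2ψ, fun x => by linear_combination -heqψ x⟩
    obtain ⟨c, hc⟩ := ground_multiple hC2 hpos hL2 hμ hφeq h
    exact ⟨c, funext hc⟩
  · intro x
    have hfun : (fun y : ℝ => φ₀ (-y)) = φ₀ := funext heven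
    have h1 : deriv (fun y : ℝ => φ₀ (-y)) x = -deriv φ₀ (-x) := deriv_comp_neg φ₀ x
    rw [hfun] at h1
    linarith
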